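/- If Φ ∈ ℝ^{m×n} has a nontrivial nullspace, then the maximum abstract simplicial complex associated with Φ equals {S ⊆ U_n : ‖z_S‖₁ < 1/2 for every z ∈ MinSupp(null(Φ)) ∩ S₁^{n-1}}. -/

import Mathlib

/-- The ℓ₁ norm of a vector in ℝⁿ. -/
noncomputable def l1 {n : ℕ} (x : Fin n → ℝ) : ℝ := ∑ i, |x i|

/-- The ℓ₁ norm of the restriction of a vector to an index set `S`. -/
noncomputable def l1S {n : ℕ} (S : Finset (Fin n)) (x : Fin n → ℝ) : ℝ := ∑ i ∈ S, |x i|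

/-- The maximum abstract simplicial complex associated with `Φ`:
all index sets `S` with `‖η_S‖₁ < ‖η_{Sᶜ}‖₁` for every nonzero `η ∈ null(Φ)`. -/
def Tmax {m n : ℕ} (Φ : Matrix (Fin m) (Fin n) ℝ) : Set (Finset (Fin n)) :=
  {S | ∀ η : Fin n → ℝ, Φ.mulVec η = 0 → η ≠ 0 → l1S S η < l1S Sᶜ η}

/-- Membership in `MinSupp(null Φ)`: `z` is a nonzero nullspace vector such that no nonzero
nullspace vector has support strictly contained in the support of `z`. -/
def MinSuppNull {m n : ℕ} (Φ : Matrix (Fin m) (Fin n) ℝ) : Set (Fin n → ℝ) :=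
  {z | Φ.mulVec z = 0 ∧ z ≠ 0 ∧
    ¬∃ y : Fin n → ℝ, Φ.mulVec y = 0 ∧ y ≠ 0 ∧ Function.support y ⊂ Function.support z}

lemma l1S_add_compl {n : ℕ} (S : Finset (Fin n)) (x : Fin n → ℝ) :
    l1S S x + l1S Sᶜ x = l1 x :=
  Finset.sum_add_sum_compl S _

lemma l1S_smul {n : ℕ} (S : Finset (Fin n)) {c : ℝ} (hc : 0 ≤ c) (x : Fin n → ℝ) :
    l1S S (c • x) = c * l1S S x := by
  simp only [l1S, Finset.mul_sum, Pi.smul_apply, smul_eq_mul, abs_mul, abs_of_nonneg hc]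

lemma l1_smul {n : ℕ} {c : ℝ} (hc : 0 ≤ c) (x : Fin n → ℝ) :
    l1 (c • x) = c * l1 x := by
  simp only [l1, Finset.mul_sum, Pi.smul_apply, smul_eq_mul, abs_mul, abs_of_nonneg hc]

lemma l1_pos {n : ℕ} {x : Fin n → ℝ} (hx : x ≠ 0) : 0 < l1 x := by
  rcases lt_or_eq_of_le (Finset.sum_nonneg (fun i _ => abs_nonneg (x i)) : (0:ℝ) ≤ l1 x) with h | h
  · exact h
  · exfalso
    apply hx
    funext i
    have := (Finset.sum_eq_zero_iff_of_nonneg (fun i _ => abs_nonneg (x i))).mp h.symm i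
      (Finset.mem_univ i)
    simpa using this

lemma aux1 {n : ℕ} (η y : Fin n → ℝ) (hsupp : ∀ i, y i ≠ 0 → η i ≠ 0)
    (hneg : ∃ i, η i * y i < 0) :
    ∃ t : ℝ, 0 < t ∧ ∃ i₀, η i₀ ≠ 0 ∧ η i₀ + t * y i₀ = 0 ∧
      ∀ i, (η i * y i ≤ 0 → |η i| = |η i + t * y i| + t * |y i|) ∧
           (0 ≤ η i * y i → |η i + t * y i| = |η i| + t * |y i|) := by
  classical
  set P : Finset (Fin n) := Finset.univ.filter (fun i => η i * y i < 0) with hP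
  have hPne : P.Nonempty := by
    obtain ⟨i, hi⟩ := hneg
    exact ⟨i, by simp [hP, hi]⟩
  obtain ⟨i₀, hi₀P, hmin⟩ := P.exists_min_image (fun i => -η i / y i) hPne
  have hi₀ : η i₀ * y i₀ < 0 := by simpa [hP] using hi₀P
  have hy₀ : y i₀ ≠ 0 := fun h => by simp [h] at hi₀
  have hη₀ : η i₀ ≠ 0 := hsupp i₀ hy₀
  set t : ℝ := -η i₀ / y i₀ with ht
  have htpos : 0 < t := by
    rcases mul_neg_iff.mp hi₀ with ⟨h1, h2⟩ | ⟨h1, h2⟩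
    · exact div_pos_of_neg_of_neg (by linarith) h2
    · exact div_pos (by linarith) h2
  refine ⟨t, htpos, i₀, hη₀, ?_, ?_⟩
  · rw [ht, div_mul_cancel₀ _ hy₀]; ring
  · intro i
    constructor
    · intro hle
      by_cases hy : y i = 0
      · simp [hy]
      · have hη : η i ≠ 0 := hsupp i hy
        have hlt : η i * y i < 0 := lt_of_le_of_ne hle (by
          intro h; exact hη (by rcases mul_eq_zero.mp h with h' | h' <;> [exact h'; exact absurd h' hy]))
        have hiP : i ∈ P := by simp [hP, hlt]
        have hmin' : t ≤ -η i / y i := hmin i hiP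
        rcases mul_neg_iff.mp hlt with ⟨h1, h2⟩ | ⟨h1, h2⟩
        · have : -η i ≤ t * y i := by
            have := (le_div_iff_of_neg h2).mp hmin'
            linarith
          have hnn : 0 ≤ η i + t * y i := by linarith
          rw [abs_of_pos h1, abs_of_neg h2, abs_of_nonneg hnn]; ring
        · have : t * y i ≤ -η i := by
            have := (le_div_iff₀ h2).mp hmin'
            linarith
          have hnp : η i + t * y i ≤ 0 := by linarith
          rw [abs_of_neg h1, abs_of_pos h2, abs_of_nonpos hnp]; ring
    · intro hge
      have : 0 ≤ η i * (t * y i) := by nlinarith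
      rcases abs_cases (η i) with ⟨ha, ha'⟩ | ⟨ha, ha'⟩ <;>
        rcases abs_cases (t * y i) with ⟨hb, hb'⟩ | ⟨hb, hb'⟩ <;>
        rcases abs_cases (η i + t * y i) with ⟨hc, hc'⟩ | ⟨hc, hc'⟩ <;>
        rw [abs_mul, abs_of_pos htpos] at * <;> nlinarith

lemma card_lt {n : ℕ} {η b : Fin n → ℝ} {i₀ : Fin n}
    (h1 : ∀ i, b i ≠ 0 → η i ≠ 0) (h2 : b i₀ = 0) (h3 : η i₀ ≠ 0) :
    (Finset.univ.filter (fun i => b i ≠ 0)).card <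
      (Finset.univ.filter (fun i => η i ≠ 0)).card := by
  apply Finset.card_lt_card
  constructor
  · intro i hi
    simp only [Finset.mem_filter, Finset.mem_univ, true_and] at hi ⊢
    exact h1 i hi
  · intro hcon
    have := hcon (by simp [h3] : i₀ ∈ Finset.univ.filter (fun i => η i ≠ 0))
    simp [h2] at this

lemma l1S_comb {n : ℕ} (S : Finset (Fin n)) {η a b : Fin n → ℝ} {c₁ c₂ : ℝ}
    (h : ∀ i, |η i| = c₁ * |a i| + c₂ * |b i|) :
    l1S S η = c₁ * l1S S a + c₂ * l1S S b := by
  simp only [l1S, Finset.mul_sum, ← Finset.sum_add_distrib]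
  exact Finset.sum_congr rfl fun i _ => h i

lemma key {m n : ℕ} (Φ : Matrix (Fin m) (Fin n) ℝ) (S : Finset (Fin n))
    (H : ∀ z ∈ MinSuppNull Φ, l1S S z < l1S Sᶜ z) :
    ∀ k : ℕ, ∀ η : Fin n → ℝ, Φ.mulVec η = 0 → η ≠ 0 →
      (Finset.univ.filter (fun i => η i ≠ 0)).card ≤ k → l1S S η < l1S Sᶜ η := by
  classical
  intro k
  induction k with
  | zero =>
    intro η _ hne hcard
    exfalso
    obtain ⟨i, hi⟩ := Function.ne_iff.mp hne
    have : i ∈ Finset.univ.filter (fun i => η i ≠ 0) := by simpa using hi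
    have := Finset.card_pos.mpr ⟨i, this⟩
    omega
  | succ k ih =>
    intro η hnull hne hcard
    by_cases hmin : ∃ y : Fin n → ℝ, Φ.mulVec y = 0 ∧ y ≠ 0 ∧
        Function.support y ⊂ Function.support η
    · obtain ⟨y, hynull, hyne, hyss⟩ := hmin
      have hsub : ∀ i, y i ≠ 0 → η i ≠ 0 := fun i hi => hyss.1 hi
      obtain ⟨j, hjη, hjy⟩ : ∃ j, η j ≠ 0 ∧ y j = 0 := by
        obtain ⟨a, ha1, ha2⟩ := Set.not_subset.mp hyss.2
        exact ⟨a, ha1, by simpa [Function.mem_support, not_not] using ha2⟩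
      obtain ⟨y₁, hy₁null, hy₁sub, hy₁j, hy₁neg⟩ :
          ∃ y₁ : Fin n → ℝ, Φ.mulVec y₁ = 0 ∧ (∀ i, y₁ i ≠ 0 → η i ≠ 0) ∧ y₁ j = 0 ∧
            ∃ i, η i * y₁ i < 0 := by
        by_cases hex : ∃ i, η i * y i < 0
        · exact ⟨y, hynull, hsub, hjy, hex⟩
        · push_neg at hex
          obtain ⟨i, hi⟩ := Function.ne_iff.mp hyne
          have hi' : y i ≠ 0 := by simpa using hi
          have hpos : 0 < η i * y i := by
            rcases lt_or_eq_of_le (hex i) with h | h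
            · exact h
            · exact absurd h.symm (mul_ne_zero (hsub i hi') hi')
          exact ⟨-y, by simp [Matrix.mulVec_neg, hynull],
            fun i hi => hsub i (by simpa using hi), by simp [hjy],
            ⟨i, by simp only [Pi.neg_apply, mul_neg]; linarith⟩⟩
      obtain ⟨t, ht, i₀, hi₀η, hi₀zero, hbr⟩ := aux1 η y₁ hy₁sub hy₁neg
      set b : Fin n → ℝ := fun i => η i + t * y₁ i with hbdef
      have hbnull : Φ.mulVec b = 0 := by
        have hb : b = η + t • y₁ := by funext i; simp [hbdef]
        rw [hb, Matrix.mulVec_add, Matrix.mulVec_smul, hnull, hy₁null]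
        simp
      have hbsub : ∀ i, b i ≠ 0 → η i ≠ 0 := by
        intro i hi hη
        apply hi
        have hy : y₁ i = 0 := by
          by_contra hy
          exact (hy₁sub i hy) hη
        simp [hbdef, hη, hy]
      have hbj : b j = η j := by simp [hbdef, hy₁j]
      have hbne : b ≠ 0 := by
        intro h
        exact hjη (by rw [← hbj, h]; simp)
      have hbcard : (Finset.univ.filter (fun i => b i ≠ 0)).card ≤ k := by
        have := card_lt hbsub hi₀zero hi₀η
        omega
      by_cases hpos : ∃ i, 0 < η i * y₁ i
      · -- two-sided case
        have hnegsub : ∀ i, (-y₁) i ≠ 0 → η i ≠ 0 := fun i hi => hy₁sub i (by simpa using hi)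
        have hneg' : ∃ i, η i * (-y₁) i < 0 := by
          obtain ⟨i, hi⟩ := hpos
          exact ⟨i, by simp only [Pi.neg_apply, mul_neg]; linarith⟩
        obtain ⟨s, hs, i₁, hi₁η, hi₁zero, har⟩ := aux1 η (-y₁) hnegsub hneg'
        set a : Fin n → ℝ := fun i => η i + s * (-y₁) i with hadef
        have hanull : Φ.mulVec a = 0 := by
          have ha : a = η + s • (-y₁) := by funext i; simp [hadef]
          rw [ha, Matrix.mulVec_add, Matrix.mulVec_smul, hnull, Matrix.mulVec_neg, hy₁null]
          simp
        have hasub : ∀ i, a i ≠ 0 → η i ≠ 0 := by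
          intro i hi hη
          apply hi
          have hy : y₁ i = 0 := by
            by_contra hy
            exact (hy₁sub i hy) hη
          simp [hadef, hη, hy]
        have hane : a ≠ 0 := by
          intro h
          have : a j = 0 := by rw [h]; simp
          simp [hadef, hy₁j] at this
          exact hjη this
        have hacard : (Finset.univ.filter (fun i => a i ≠ 0)).card ≤ k := by
          have := card_lt hasub hi₁zero hi₁η
          omega
        have hst : 0 < s + t := by linarith
        have hpoint : ∀ i, |η i| = (t / (s + t)) * |a i| + (s / (s + t)) * |b i| := by
          intro i
          have key : |η i| * (s + t) = t * |a i| + s * |b i| := by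
            rcases le_or_gt (η i * y₁ i) 0 with hle | hlt
            · have h1 := (hbr i).1 hle
              have h2 := (har i).2 (by simp only [Pi.neg_apply, mul_neg]; linarith)
              simp only [Pi.neg_apply, abs_neg] at h2
              simp only [hbdef, hadef, Pi.neg_apply]
              linear_combination (-t) * h2 + s * h1
            · have h1 := (hbr i).2 (le_of_lt hlt)
              have h2 := (har i).1 (by simp only [Pi.neg_apply, mul_neg]; linarith)
              simp only [Pi.neg_apply, abs_neg] at h2
              simp only [hbdef, hadef, Pi.neg_apply]
              linear_combination t * h2 + (-s) * h1
          field_simp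
          linarith [key]
        have e1 := l1S_comb S hpoint
        have e2 := l1S_comb Sᶜ hpoint
        have hIa := ih a hanull hane hacard
        have hIb := ih b hbnull hbne hbcard
        have hc₁ : 0 < t / (s + t) := div_pos ht hst
        have hc₂ : 0 < s / (s + t) := div_pos hs hst
        nlinarith [mul_lt_mul_of_pos_left hIa hc₁, mul_lt_mul_of_pos_left hIb hc₂]
      · -- one-sided case
        push_neg at hpos
        have hpoint : ∀ i, |η i| = 1 * |b i| + t * |y₁ i| := by
          intro i
          have := (hbr i).1 (hpos i)
          simp only [hbdef]
          linarith [this]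
        have hy₁ne : y₁ ≠ 0 := by
          intro h
          obtain ⟨i, hi⟩ := hy₁neg
          rw [h] at hi
          simp at hi
        have hy₁card : (Finset.univ.filter (fun i => y₁ i ≠ 0)).card ≤ k := by
          have := card_lt hy₁sub hy₁j hjη
          omega
        have e1 := l1S_comb S hpoint
        have e2 := l1S_comb Sᶜ hpoint
        have hIb := ih b hbnull hbne hbcard
        have hIy := ih y₁ hy₁null hy₁ne hy₁card
        nlinarith [mul_lt_mul_of_pos_left hIy ht]
    · exact H η ⟨hnull, hne, hmin⟩

/-- If `Φ ∈ ℝ^{m×n}` has a nontrivial nullspace, then the maximum abstract simplicial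
complex associated with `Φ` equals
`{S ⊆ U_n : ‖z_S‖₁ < 1/2 for every z ∈ MinSupp(null Φ) ∩ S₁^{n-1}}`. -/
theorem stmt8 {m n : ℕ} (Φ : Matrix (Fin m) (Fin n) ℝ)
    (hker : ∃ η : Fin n → ℝ, η ≠ 0 ∧ Φ.mulVec η = 0) :
    Tmax Φ = {S : Finset (Fin n) |
      ∀ z ∈ MinSuppNull Φ ∩ {x | l1 x = 1}, l1S S z < 1 / 2} := by
  ext S
  simp only [Tmax, Set.mem_setOf_eq]
  constructor
  · intro hS z hz
    obtain ⟨⟨hznull, hzne, _⟩, hz1⟩ := hz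
    have h := hS z hznull hzne
    have hsum := l1S_add_compl S z
    rw [hz1] at hsum
    linarith
  · intro hS
    have H : ∀ z ∈ MinSuppNull Φ, l1S S z < l1S Sᶜ z := by
      intro z hz
      obtain ⟨hznull, hzne, hzmin⟩ := hz
      have hl1 : 0 < l1 z := l1_pos hzne
      set c : ℝ := (l1 z)⁻¹ with hc
      have hcpos : 0 < c := inv_pos.mpr hl1
      have hw : (c • z) ∈ MinSuppNull Φ ∩ {x | l1 x = 1} := by
        refine ⟨⟨?_, ?_, ?_⟩, ?_⟩
        · rw [Matrix.mulVec_smul, hznull]; simp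
        · exact smul_ne_zero (ne_of_gt hcpos) hzne
        · rw [Function.support_const_smul_of_ne_zero c z (ne_of_gt hcpos)]
          exact hzmin
        · show l1 (c • z) = 1
          rw [l1_smul (le_of_lt hcpos), hc, inv_mul_cancel₀ (ne_of_gt hl1)]
      have h1 := hS _ hw
      have hsum := l1S_add_compl S (c • z)
      have hl1w : l1 (c • z) = 1 := hw.2
      rw [hl1w] at hsum
      have hlt : l1S S (c • z) < l1S Sᶜ (c • z) := by linarith
      rw [l1S_smul S (le_of_lt hcpos), l1S_smul Sᶜ (le_of_lt hcpos)] at hlt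
      exact (mul_lt_mul_iff_right₀ hcpos).mp hlt
    intro η hnull hne
    exact key Φ S H _ η hnull hne le_rfl
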